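/- Let G be a pertinent group and H a subgroup of G of even order containing a Sylow 3-subgroup of G. Then H is pertinent. -/

import Mathlib

/-- A finite group is *pertinent* if it has exactly three involutions and
they are pairwise conjugate. -/
def Pertinent (G : Type*) [Group G] : Prop :=
  Finite G ∧ {g : G | orderOf g = 2}.ncard = 3 ∧
    ∀ a b : G, orderOf a = 2 → orderOf b = 2 → IsConj a b

section aux

variable {G : Type*} [Group G]

/-- Conjugation by `g` as a permutation of the set of involutions. -/
def conjPerm (g : G) : Equiv.Perm {x : G // orderOf x = 2} :=
  Equiv.Perm.subtypePerm (MulAut.conj g).toEquiv (fun x => by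
    show orderOf (g * x * g⁻¹) = 2 ↔ orderOf x = 2
    have h : SemiconjBy g x (g * x * g⁻¹) := by unfold SemiconjBy; group
    rw [h.orderOf_eq g])

@[simp] lemma conjPerm_coe (g : G) (x : {x : G // orderOf x = 2}) :
    ((conjPerm g x : {x : G // orderOf x = 2}) : G) = g * x * g⁻¹ := rfl

/-- Conjugation as a homomorphism to permutations of the involutions. -/
def conjHom (G : Type*) [Group G] : G →* Equiv.Perm {x : G // orderOf x = 2} where
  toFun := conjPerm
  map_one' := by ext x; simp
  map_mul' g h := by ext x; simp [mul_assoc]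

lemma mem_three {α : Type*} [Finite α] (hcard : Nat.card α = 3) {a b c : α}
    (hab : a ≠ b) (hac : a ≠ c) (hbc : b ≠ c) (d : α) : d = a ∨ d = b ∨ d = c := by
  have h1 : ({a, b, c} : Set α).ncard = 3 := by
    rw [Set.ncard_insert_of_notMem (by simp [hab, hac]), Set.ncard_pair hbc]
  have h2 : ({a, b, c} : Set α) = Set.univ :=
    Set.eq_of_subset_of_ncard_le (Set.subset_univ _)
      (by rw [Set.ncard_univ, hcard, h1])
  have hd : d ∈ ({a, b, c} : Set α) := h2 ▸ Set.mem_univ d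
  simpa using hd

end aux

theorem stmt_3 (G : Type*) [Group G] (hG : Pertinent G) (H : Subgroup G)
    (hHeven : Even (Nat.card H)) (P : Sylow 3 G) (hP : (P : Subgroup G) ≤ H) :
    Pertinent H := by
  obtain ⟨hfin, hcard, hconj⟩ := hG
  haveI : Finite G := hfin
  set I := {x : G // orderOf x = 2} with hI
  have hcardI : Nat.card I = 3 := by
    rw [hI]
    have := Nat.card_coe_set_eq {g : G | orderOf g = 2}
    rw [hcard] at this
    exact this
  haveI : Finite I := Finite.of_injective Subtype.val Subtype.coe_injective
  -- an involution in H
  obtain ⟨t₀, ht₀⟩ := exists_prime_orderOf_dvd_card' (G := H) 2 (by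
    obtain ⟨r, hr⟩ := hHeven; exact ⟨r, by omega⟩)
  have ht₀G : orderOf ((t₀ : G)) = 2 := by
    rw [← ht₀]
    exact orderOf_injective H.subtype Subtype.coe_injective t₀
  let t : I := ⟨(t₀ : G), ht₀G⟩
  -- transitivity of the conjugation action
  have htrans : ∀ x y : I, ∃ g : G, conjHom G g x = y := by
    rintro ⟨x, hx⟩ ⟨y, hy⟩
    obtain ⟨c, hc⟩ := isConj_iff.mp (hconj x y hx hy)
    exact ⟨c, Subtype.ext (by exact hc)⟩
  -- 3 divides the order of the image
  have hge : 3 ≤ Nat.card (conjHom G).range := by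
    have hsurj : Function.Surjective (fun r : (conjHom G).range => (r : Equiv.Perm I) t) := by
      rintro y
      obtain ⟨g, hg⟩ := htrans t y
      exact ⟨⟨conjHom G g, ⟨g, rfl⟩⟩, hg⟩
    calc 3 = Nat.card I := hcardI.symm
      _ ≤ Nat.card (conjHom G).range := Nat.card_le_card_of_surjective _ hsurj
  have hperm6 : Nat.card (Equiv.Perm I) = 6 := by
    have : Nat.card (Equiv.Perm I) = (Nat.card I).factorial := by
      haveI : DecidableEq I := Classical.decEq I
      haveI : Fintype I := Fintype.ofFinite I
      rw [Nat.card_eq_fintype_card, Fintype.card_perm, Nat.card_eq_fintype_card]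
    rw [this, hcardI]; rfl
  have hdvd6 : Nat.card (conjHom G).range ∣ 6 := by
    rw [← hperm6]; exact Subgroup.card_subgroup_dvd_card _
  have h3dvd : 3 ∣ Nat.card (conjHom G).range := by
    have hub : Nat.card (conjHom G).range ≤ 6 := Nat.le_of_dvd (by norm_num) hdvd6
    set n := Nat.card (conjHom G).range with hn
    clear_value n
    interval_cases n <;> revert hdvd6 <;> decide
  -- P is not contained in the kernel
  have hnotle : ¬ (P : Subgroup G) ≤ (conjHom G).ker := by
    intro hle
    have h1 : (conjHom G).ker.index ∣ (P : Subgroup G).index :=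
      Subgroup.index_dvd_of_le hle
    rw [Subgroup.index_ker] at h1
    exact P.not_dvd_index (h3dvd.trans h1)
  obtain ⟨g, hgP, hgker⟩ := SetLike.not_le_iff_exists.mp hnotle
  have hgne : conjHom G g ≠ 1 := by
    intro h; exact hgker (by simpa [MonoidHom.mem_ker] using h)
  set σ : Equiv.Perm I := conjHom G g with hσ
  -- σ has order 3
  have hσ3 : orderOf σ = 3 := by
    obtain ⟨k, hk⟩ := P.2 ⟨g, hgP⟩
    have hgpow : g ^ (3 : ℕ) ^ k = 1 := by
      have := congrArg (Subtype.val) hk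
      simpa using this
    have h1 : orderOf σ ∣ 3 ^ k := by
      apply orderOf_dvd_of_pow_eq_one
      rw [hσ, ← map_pow, hgpow, map_one]
    have h2 : orderOf σ ∣ 6 := hperm6 ▸ orderOf_dvd_natCard σ
    obtain ⟨j, hj, hje⟩ := (Nat.dvd_prime_pow (by norm_num)).mp h1
    have hjle : (3 : ℕ) ^ j ≤ 6 := Nat.le_of_dvd (by norm_num) (hje ▸ h2)
    have hj1 : j ≤ 1 := by
      by_contra hc
      push_neg at hc
      have := Nat.pow_le_pow_right (by norm_num : 1 ≤ 3) hc
      omega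
    interval_cases j
    · simp at hje; exact absurd hje hgne
    · simpa using hje
  have hσpow3 : σ ^ 3 = 1 := by rw [← hσ3]; exact pow_orderOf_eq_one σ
  -- σ has no fixed point
  have hnofix : ∀ x : I, σ x ≠ x := by
    intro x hx
    apply hgne
    apply Equiv.ext
    intro y
    show σ y = y
    by_cases hyx : y = x
    · rw [hyx]; exact hx
    by_cases hy : σ y = y
    · exact hy
    · exfalso
      have hne1 : x ≠ y := fun h => hyx h.symm
      have hne2 : x ≠ σ y := fun h => hyx (σ.injective (hx.trans h)).symm
      have hne3 : y ≠ σ y := fun h => hy h.symm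
      rcases mem_three hcardI hne1 hne2 hne3 (σ (σ y)) with h4 | h4 | h4
      · exact hne2 (σ.injective (hx.trans h4.symm))
      · have h6 : (σ ^ 3) y = σ y := by
          simp only [pow_succ, pow_zero, one_mul, Equiv.Perm.mul_apply]
          rw [h4]
        rw [hσpow3] at h6
        have h7 : y = σ y := by simpa using h6
        exact hy h7.symm
      · exact hy (σ.injective h4)
  -- the three involutions
  have hd1 : t ≠ σ t := fun h => hnofix t h.symm
  have hd2 : t ≠ σ (σ t) := by
    intro h
    have h6 : (σ ^ 3) t = σ t := by
      simp only [pow_succ, pow_zero, one_mul, Equiv.Perm.mul_apply]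
      rw [← h]
    rw [hσpow3] at h6
    exact hd1 (by simpa using h6)
  have hd3 : σ t ≠ σ (σ t) := fun h => hnofix t (σ.injective h).symm
  have hall : ∀ y : I, y = t ∨ y = σ t ∨ y = σ (σ t) := mem_three hcardI hd1 hd2 hd3
  have hgH : g ∈ H := hP hgP
  -- every involution of G lies in H
  have hsub : ∀ x : G, orderOf x = 2 → x ∈ H := by
    intro x hx
    rcases hall ⟨x, hx⟩ with h | h | h
    · have : x = (t₀ : G) := congrArg (fun z : I => (z : G)) h
      rw [this]; exact t₀.2
    · have : x = g * (t₀ : G) * g⁻¹ := congrArg (fun z : I => (z : G)) h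
      rw [this]; exact H.mul_mem (H.mul_mem hgH t₀.2) (H.inv_mem hgH)
    · have : x = g * (g * (t₀ : G) * g⁻¹) * g⁻¹ := congrArg (fun z : I => (z : G)) h
      rw [this]
      exact H.mul_mem (H.mul_mem hgH (H.mul_mem (H.mul_mem hgH t₀.2) (H.inv_mem hgH)))
        (H.inv_mem hgH)
  haveI hfinH : Finite H := inferInstance
  refine ⟨hfinH, ?_, ?_⟩
  · -- counting involutions in H
    have himg : (Subtype.val : H → G) '' {h : H | orderOf h = 2} = {x : G | orderOf x = 2} := by
      ext x
      constructor
      · rintro ⟨h, hh, rfl⟩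
        have := orderOf_injective H.subtype Subtype.coe_injective h
        simpa [this] using hh
      · intro hx
        refine ⟨⟨x, hsub x hx⟩, ?_, rfl⟩
        show orderOf (⟨x, hsub x hx⟩ : H) = 2
        have := orderOf_injective H.subtype Subtype.coe_injective ⟨x, hsub x hx⟩
        rw [← this]
        exact hx
    calc {h : H | orderOf h = 2}.ncard
        = ((Subtype.val : H → G) '' {h : H | orderOf h = 2}).ncard :=
          (Set.ncard_image_of_injective _ Subtype.coe_injective).symm
      _ = 3 := by rw [himg, hcard]
  · -- conjugacy in H
    intro a b ha hb
    set gH : H := ⟨g, hgH⟩ with hgHdef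
    have key : ∀ x : H, orderOf x = 2 → IsConj t₀ x := by
      intro x hx
      have hxG : orderOf ((x : G)) = 2 := by
        rw [← hx]; exact orderOf_injective H.subtype Subtype.coe_injective x
      rcases hall ⟨(x : G), hxG⟩ with h | h | h
      · have : (x : G) = (t₀ : G) := (congrArg (fun z : I => (z : G)) h)
        rw [show x = t₀ from Subtype.ext this]
      · have hxg : (x : G) = g * (t₀ : G) * g⁻¹ := congrArg (fun z : I => (z : G)) h
        refine isConj_iff.mpr ⟨gH, ?_⟩
        apply Subtype.ext
        push_cast [hgHdef]
        exact hxg.symm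
      · have hxg : (x : G) = g * (g * (t₀ : G) * g⁻¹) * g⁻¹ := congrArg (fun z : I => (z : G)) h
        refine isConj_iff.mpr ⟨gH * gH, ?_⟩
        apply Subtype.ext
        push_cast [hgHdef]
        rw [hxg]; group
    exact (key a ha).symm.trans (key b hb)
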